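/- Let m ∈ ℕ, n = 2m+1, and let s : Fin n → ℝ be injective. Define the median med(s) as the (m+1)-th smallest value of s, i.e., med(s) = (s ∘ σ) m for any permutation σ of Fin n such that s ∘ σ is monotone. Let k ∈ Fin n be the node attaining the median, i.e., s k = med(s), and let s̃ : Fin n → ℝ satisfy s̃ j = s j for every j ≠ k and s̃ k ≠ s k. Then med(s̃) ≠ med(s). -/

import Mathlib

/-- The median holder's value is pinned down: for distinct values, if node `k` attains
the median and `s̃` agrees with `s` except at `k` with `s̃ k ≠ s k`, then the median
changes. Here the median of a `(2m+1)`-tuple is its `(m+1)`-th smallest value,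
obtained via any sorting permutation. -/
theorem stmt_17 (m : ℕ) (s : Fin (2 * m + 1) → ℝ) (hs : Function.Injective s)
    (st : Fin (2 * m + 1) → ℝ) (k : Fin (2 * m + 1))
    (hst : ∀ j, j ≠ k → st j = s j)
    (σ σ' : Equiv.Perm (Fin (2 * m + 1)))
    (hσ : Monotone (s ∘ σ)) (hσ' : Monotone (st ∘ σ'))
    (hk : s k = s (σ ⟨m, by omega⟩)) (hstk : st k ≠ s k) :
    st (σ' ⟨m, by omega⟩) ≠ s (σ ⟨m, by omega⟩) := by
  intro h
  set mid : Fin (2*m+1) := ⟨m, by omega⟩ with hmid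
  set M : ℝ := s (σ mid) with hM
  have hsm : StrictMono (s ∘ σ) := hσ.strictMono_of_injective (hs.comp σ.injective)
  have keylt : ∀ j, s j < M ↔ ((σ.symm j) : ℕ) < m := by
    intro j
    have hj : s j = (s ∘ σ) (σ.symm j) := by simp
    rw [hj, hM]
    exact hsm.lt_iff_lt
  have keygt : ∀ j, M < s j ↔ m < ((σ.symm j) : ℕ) := by
    intro j
    have hj : s j = (s ∘ σ) (σ.symm j) := by simp
    rw [hj, hM]
    exact hsm.lt_iff_lt
  -- card of {j | s j < M} = m
  have hcardlt : (Finset.univ.filter (fun j => s j < M)).card = m := by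
    have he : (Finset.univ.filter (fun j => s j < M))
        = (Finset.Iio mid).map σ.toEmbedding := by
      ext j
      simp only [Finset.mem_filter, Finset.mem_univ, true_and, Finset.mem_map,
        Finset.mem_Iio, Equiv.coe_toEmbedding, keylt j]
      constructor
      · intro hlt
        exact ⟨σ.symm j, Fin.lt_def.mpr hlt, by simp⟩
      · rintro ⟨i, hi, rfl⟩
        rw [Equiv.symm_apply_apply]; exact Fin.lt_def.mp hi
    rw [he, Finset.card_map, Fin.card_Iio]
  have hcardgt : (Finset.univ.filter (fun j => M < s j)).card = m := by
    have he : (Finset.univ.filter (fun j => M < s j))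
        = (Finset.Ioi mid).map σ.toEmbedding := by
      ext j
      simp only [Finset.mem_filter, Finset.mem_univ, true_and, Finset.mem_map,
        Finset.mem_Ioi, Equiv.coe_toEmbedding, keygt j]
      constructor
      · intro hlt
        exact ⟨σ.symm j, Fin.lt_def.mpr hlt, by simp⟩
      · rintro ⟨i, hi, rfl⟩
        rw [Equiv.symm_apply_apply]; exact Fin.lt_def.mp hi
    rw [he, Finset.card_map, Fin.card_Ioi]
    have : (mid : ℕ) = m := rfl
    omega
  -- lower bounds for st side
  have hge : (Finset.Ici mid).map σ'.toEmbedding ⊆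
      Finset.univ.filter (fun j => M ≤ st j) := by
    intro j hj
    simp only [Finset.mem_map, Finset.mem_Ici, Equiv.coe_toEmbedding] at hj
    obtain ⟨i, hi, rfl⟩ := hj
    simp only [Finset.mem_filter, Finset.mem_univ, true_and]
    calc M = st (σ' mid) := h.symm
    _ ≤ st (σ' i) := hσ' hi
  have hle : (Finset.Iic mid).map σ'.toEmbedding ⊆
      Finset.univ.filter (fun j => st j ≤ M) := by
    intro j hj
    simp only [Finset.mem_map, Finset.mem_Iic, Equiv.coe_toEmbedding] at hj
    obtain ⟨i, hi, rfl⟩ := hj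
    simp only [Finset.mem_filter, Finset.mem_univ, true_and]
    calc st (σ' i) ≤ st (σ' mid) := hσ' hi
    _ = M := h
  have hgec : m + 1 ≤ (Finset.univ.filter (fun j => M ≤ st j)).card := by
    have := Finset.card_le_card hge
    rw [Finset.card_map, Fin.card_Ici] at this
    have h2 : (mid : ℕ) = m := rfl
    omega
  have hlec : m + 1 ≤ (Finset.univ.filter (fun j => st j ≤ M)).card := by
    have := Finset.card_le_card hle
    rw [Finset.card_map, Fin.card_Iic] at this
    have h2 : (mid : ℕ) = m := rfl
    omega
  have hM' : st k ≠ M := by rw [← hk]; exact hstk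
  rcases lt_or_gt_of_ne hM' with hc | hc
  · -- st k < M : upper set has ≤ m elements
    have hsub : Finset.univ.filter (fun j => M ≤ st j) ⊆
        Finset.univ.filter (fun j => M < s j) := by
      intro j hj
      simp only [Finset.mem_filter, Finset.mem_univ, true_and] at hj ⊢
      have hjk : j ≠ k := by rintro rfl; exact absurd hj (not_le.mpr hc)
      rw [hst j hjk] at hj
      rcases hj.lt_or_eq with h' | h'
      · exact h'
      · exact absurd (hs (by rw [← h', hk])) hjk
    have := Finset.card_le_card hsub
    omega
  · have hsub : Finset.univ.filter (fun j => st j ≤ M) ⊆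
        Finset.univ.filter (fun j => s j < M) := by
      intro j hj
      simp only [Finset.mem_filter, Finset.mem_univ, true_and] at hj ⊢
      have hjk : j ≠ k := by rintro rfl; exact absurd hj (not_le.mpr hc)
      rw [hst j hjk] at hj
      rcases hj.lt_or_eq with h' | h'
      · exact h'
      · exact absurd (hs (by rw [h', hk])) hjk
    have := Finset.card_le_card hsub
    omega
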